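/- Let 0 < a < b, λ ∈ [0,1], q > 1 and 1/p + 1/q = 1. With H = 2ab/(a+b), A = (a+b)/2, G = √(ab), and L = (b−a)/(ln b − ln a), the following inequality holds: |(1−λ)·H + λ·A − G²/L| ≤ ( ab(b−a)·C₄(λ,p)^{1/p} / (4·[(1−q)(1−2q)(b−a)²]^{1/q}) )·{ ( C₅(q;a,b) + C₆(q;a,b) )^{1/q} + ( C₆(q;b,a) + C₅(q;b,a) )^{1/q} }. -/

import Mathlib

open MeasureTheory Set

section AuxHH
open intervalIntegral

lemma weight_integral (mu p : ℝ) (hp : 1 < p) (h0 : 0 ≤ mu) (h1 : mu ≤ 1) :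
    ∫ t in (0:ℝ)..1, |t - mu| ^ p = (mu ^ (p+1) + (1-mu) ^ (p+1)) / (p+1) := by
  have hsplit : ∫ t in (0:ℝ)..1, |t - mu| ^ p
      = (∫ t in (0:ℝ)..mu, |t - mu| ^ p) + ∫ t in mu..1, |t - mu| ^ p := by
    rw [integral_add_adjacent_intervals] <;>
    · apply ContinuousOn.intervalIntegrable
      exact (continuousOn_id.sub continuousOn_const).abs.rpow_const
        (fun x _ => Or.inr (le_of_lt (lt_trans zero_lt_one hp)))
  have e1 : ∫ t in (0:ℝ)..mu, |t - mu| ^ p = mu ^ (p+1) / (p+1) := by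
    have : ∫ t in (0:ℝ)..mu, |t - mu| ^ p = ∫ t in (0:ℝ)..mu, (mu - t) ^ p := by
      apply integral_congr
      intro x hx
      rw [uIcc_of_le h0] at hx
      dsimp only
      rw [abs_of_nonpos (by linarith [hx.2]), neg_sub]
    rw [this, integral_comp_sub_left (fun u => u ^ p) mu, sub_self, sub_zero,
      integral_rpow (Or.inl (by linarith)),
      Real.zero_rpow (by positivity), sub_zero]
  have e2 : ∫ t in mu..1, |t - mu| ^ p = (1-mu) ^ (p+1) / (p+1) := by
    have : ∫ t in mu..(1:ℝ), |t - mu| ^ p = ∫ t in mu..(1:ℝ), (t - mu) ^ p := by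
      apply integral_congr
      intro x hx
      rw [uIcc_of_le h1] at hx
      dsimp only
      rw [abs_of_nonneg (by linarith [hx.1])]
    rw [this, integral_comp_sub_right (fun u => u ^ p) mu, sub_self,
      integral_rpow (Or.inl (by linarith)),
      Real.zero_rpow (by positivity), sub_zero]
  rw [hsplit, e1, e2]; ring

-- closed form of ∫ (t-μ)·(−K/(c+dt)²)
lemma kernel_integral (c d mu K : ℝ) (hc : 0 < c) (hd : 0 < d) :
    ∫ t in (0:ℝ)..1, (t - mu) * (-K / (c + d*t)^2)
      = -(K/d^2) * (Real.log (c+d) - Real.log c + (c + d*mu) * ((c+d)⁻¹ - c⁻¹)) := by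
  have hpos : ∀ t ∈ uIcc (0:ℝ) 1, 0 < c + d * t := by
    intro t ht
    rw [uIcc_of_le zero_le_one] at ht
    nlinarith [ht.1, ht.2]
  have key : ∀ t ∈ uIcc (0:ℝ) 1, HasDerivAt
      (fun t => -(K/d^2) * (Real.log (c + d*t) + (c + d*mu) * (c + d*t)⁻¹))
      ((t - mu) * (-K / (c + d*t)^2)) t := by
    intro t ht
    have h0 : c + d * t ≠ 0 := (hpos t ht).ne'
    have hlin : HasDerivAt (fun t : ℝ => c + d * t) d t := by
      simpa using ((hasDerivAt_id t).const_mul d).const_add c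
    have hlog : HasDerivAt (fun t => Real.log (c + d*t)) (d / (c + d*t)) t :=
      by have := (Real.hasDerivAt_log h0).comp t hlin; exact this.congr_deriv (by ring)
    have hinv : HasDerivAt (fun t => (c + d*t)⁻¹) (-(d) / (c + d*t)^2) t := by
      have := (hasDerivAt_inv h0).comp t hlin
      exact this.congr_deriv (by ring)
    have := ((hlog.add (hinv.const_mul (c + d*mu))).const_mul (-(K/d^2)))
    refine this.congr_deriv ?_
    field_simp
    ring
  rw [integral_eq_sub_of_hasDerivAt key]
  · have h1 : c + d * 1 = c + d := by ring
    have h0' : c + d * 0 = c := by ring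
    simp only [h1, h0']
    ring
  · apply ContinuousOn.intervalIntegrable
    apply ContinuousOn.mul (continuousOn_id.sub continuousOn_const)
    apply ContinuousOn.div continuousOn_const
    · exact (continuousOn_const.add (continuousOn_const.mul continuousOn_id)).pow 2
    · intro t ht
      exact pow_ne_zero 2 (hpos t ht).ne'

-- ∫ (c+dt)^(-2q)
lemma qpow_integral (c d q : ℝ) (hc : 0 < c) (hd : 0 < d) (hq : 1 < q) :
    ∫ t in (0:ℝ)..1, (c + d*t) ^ (-(2*q))
      = (c ^ (1-2*q) - (c+d) ^ (1-2*q)) / (d * (2*q-1)) := by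
  have hpos : ∀ t ∈ uIcc (0:ℝ) 1, 0 < c + d * t := by
    intro t ht
    rw [uIcc_of_le zero_le_one] at ht
    nlinarith [ht.1, ht.2]
  have key : ∀ t ∈ uIcc (0:ℝ) 1, HasDerivAt
      (fun t => (c + d*t) ^ (1-2*q) / (d * (1-2*q)))
      ((c + d*t) ^ (-(2*q))) t := by
    intro t ht
    have h0 : c + d * t ≠ 0 := (hpos t ht).ne'
    have hlin : HasDerivAt (fun t : ℝ => c + d * t) d t := by
      simpa using ((hasDerivAt_id t).const_mul d).const_add c
    have hr : HasDerivAt (fun x : ℝ => x ^ (1-2*q)) ((1-2*q) * (c+d*t) ^ (1-2*q-1)) (c+d*t) :=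
      Real.hasDerivAt_rpow_const (Or.inl h0)
    have := (hr.comp t hlin).div_const (d * (1-2*q))
    refine this.congr_deriv ?_
    have hne : d * (1 - 2*q) ≠ 0 := by
      apply mul_ne_zero hd.ne'
      intro h; nlinarith
    rw [show (1:ℝ)-2*q-1 = -(2*q) by ring]
    have hne2 : (1:ℝ) - 2*q ≠ 0 := by intro h; nlinarith
    field_simp
  rw [integral_eq_sub_of_hasDerivAt key]
  · have h1 : c + d * 1 = c + d := by ring
    have h0' : c + d * 0 = c := by ring
    rw [h1, h0']
    rw [div_sub_div_same, show d * (1-2*q) = -(d*(2*q-1)) by ring, div_neg]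
    ring
  · apply ContinuousOn.intervalIntegrable
    apply ContinuousOn.rpow_const
    · exact continuousOn_const.add (continuousOn_const.mul continuousOn_id)
    · intro t ht; exact Or.inl (hpos t ht).ne'

lemma holder_step (p q mu c d K : ℝ) (hpq : Real.HolderConjugate p q)
    (hc : 0 < c) (hd : 0 < d) (hK : 0 < K) :
    |∫ t in (0:ℝ)..1, (t - mu) * (-K / (c + d*t)^2)|
      ≤ (∫ t in (0:ℝ)..1, |t - mu| ^ p) ^ (1/p)
        * (K * (∫ t in (0:ℝ)..1, (c + d*t) ^ (-(2*q))) ^ (1/q)) := by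
  have hposIoc : ∀ t ∈ Ioc (0:ℝ) 1, 0 < c + d * t := by
    intro t ht; nlinarith [ht.1, ht.2]
  set g : ℝ → ℝ := fun t => -K / (c + d*t)^2 with hg
  have hgm : AEStronglyMeasurable g (volume.restrict (Ioc (0:ℝ) 1)) := by
    apply Measurable.aestronglyMeasurable
    exact (measurable_const.div ((measurable_const.add
      (measurable_const.mul measurable_id)).pow measurable_const))
  have hfm : AEStronglyMeasurable (fun t : ℝ => t - mu) (volume.restrict (Ioc (0:ℝ) 1)) :=
    (measurable_id.sub measurable_const).aestronglyMeasurable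
  have hmemf : MemLp (fun t : ℝ => t - mu) (ENNReal.ofReal p) (volume.restrict (Ioc (0:ℝ) 1)) := by
    apply MemLp.of_bound hfm (|mu| + 1)
    refine (ae_restrict_iff' measurableSet_Ioc).2 (ae_of_all _ fun t ht => ?_)
    rw [Real.norm_eq_abs]
    calc |t - mu| ≤ |t| + |mu| := abs_sub t mu
      _ ≤ 1 + |mu| := by
          have : |t| ≤ 1 := abs_le.2 ⟨by linarith [ht.1], ht.2⟩
          linarith
      _ = |mu| + 1 := by ring
  have hmemg : MemLp g (ENNReal.ofReal q) (volume.restrict (Ioc (0:ℝ) 1)) := by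
    apply MemLp.of_bound hgm (K / c^2)
    refine (ae_restrict_iff' measurableSet_Ioc).2 (ae_of_all _ fun t ht => ?_)
    have h1 : 0 < c + d * t := hposIoc t ht
    rw [Real.norm_eq_abs, hg, abs_div, abs_neg, abs_of_pos hK, abs_of_pos (by positivity)]
    apply div_le_div_of_nonneg_left hK.le (by positivity)
    nlinarith [mul_pos hd ht.1, sq_nonneg (d*t), mul_pos hc (mul_pos hd ht.1)]
  have hH := integral_mul_norm_le_Lp_mul_Lq (μ := volume.restrict (Ioc (0:ℝ) 1)) hpq hmemf hmemg
  have step1 : |∫ t in (0:ℝ)..1, (t - mu) * g t|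
      ≤ ∫ t in Ioc (0:ℝ) 1, ‖t - mu‖ * ‖g t‖ := by
    rw [← Real.norm_eq_abs]
    refine (intervalIntegral.norm_integral_le_integral_norm zero_le_one).trans_eq ?_
    rw [intervalIntegral.integral_of_le zero_le_one]
    exact setIntegral_congr_fun measurableSet_Ioc (fun t _ => by simp [norm_mul])
  have e1 : ∫ t in Ioc (0:ℝ) 1, ‖(fun t : ℝ => t - mu) t‖ ^ p = ∫ t in (0:ℝ)..1, |t - mu| ^ p := by
    rw [intervalIntegral.integral_of_le zero_le_one]
    exact setIntegral_congr_fun measurableSet_Ioc (fun t _ => by rw [Real.norm_eq_abs])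
  have e2 : ∫ t in Ioc (0:ℝ) 1, ‖g t‖ ^ q = K ^ q * ∫ t in (0:ℝ)..1, (c + d*t) ^ (-(2*q)) := by
    rw [intervalIntegral.integral_of_le zero_le_one, ← MeasureTheory.integral_const_mul]
    apply setIntegral_congr_fun measurableSet_Ioc
    intro t ht
    have h1 : 0 < c + d * t := hposIoc t ht
    rw [hg]
    dsimp only
    rw [Real.norm_eq_abs, abs_div, abs_neg, abs_of_pos hK, abs_of_pos (by positivity),
      Real.div_rpow hK.le (by positivity), ← Real.rpow_natCast (c + d*t) 2,
      ← Real.rpow_mul h1.le, Real.rpow_neg h1.le, div_eq_mul_inv]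
    norm_num
  have e3 : (K ^ q * ∫ t in (0:ℝ)..1, (c + d*t) ^ (-(2*q))) ^ (1/q)
      = K * (∫ t in (0:ℝ)..1, (c + d*t) ^ (-(2*q))) ^ (1/q) := by
    have hI : 0 ≤ ∫ t in (0:ℝ)..1, (c + d*t) ^ (-(2*q)) := by
      apply intervalIntegral.integral_nonneg zero_le_one
      intro t ht
      exact Real.rpow_nonneg (by nlinarith [mul_nonneg hd.le ht.1]) _
    rw [Real.mul_rpow (Real.rpow_nonneg hK.le q) hI, ← Real.rpow_mul hK.le,
      mul_one_div, div_self hpq.symm.ne_zero, Real.rpow_one]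
  calc |∫ t in (0:ℝ)..1, (t - mu) * g t| ≤ ∫ t in Ioc (0:ℝ) 1, ‖t - mu‖ * ‖g t‖ := step1
    _ ≤ (∫ t in Ioc (0:ℝ) 1, ‖(fun t : ℝ => t - mu) t‖ ^ p) ^ (1/p)
        * (∫ t in Ioc (0:ℝ) 1, ‖g t‖ ^ q) ^ (1/q) := hH
    _ = _ := by rw [e1, e2, e3]

end AuxHH

/-- `C₄(λ, p)` from Theorem 2.4. -/
noncomputable def C4 (lam p : ℝ) : ℝ := (lam ^ (p + 1) + (1 - lam) ^ (p + 1)) / (p + 1)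

/-- `C₅(q; u, ϑ)` from Theorem 2.4. -/
noncomputable def C5 (q u v : ℝ) : ℝ :=
  ((u + v) / 2) ^ (1 - 2 * q) * ((v - 3 * u) / 2 - q * (v - u)) + u ^ (2 - 2 * q)

/-- `C₆(q; u, ϑ)` from Theorem 2.4. -/
noncomputable def C6 (q u v : ℝ) : ℝ :=
  ((u + v) / 2) ^ (1 - 2 * q) * ((3 * v - u) / 2 - q * (v - u))
    + u ^ (1 - 2 * q) * (u - 2 * v + 2 * q * (v - u))

set_option maxHeartbeats 2000000 in
theorem prop_means3 (a b : ℝ) (ha : 0 < a) (hab : a < b)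
    (lam : ℝ) (hlam : lam ∈ Icc (0:ℝ) 1)
    (p q : ℝ) (hq : 1 < q) (hpq : 1 / p + 1 / q = 1) :
    |(1 - lam) * (2 * a * b / (a + b)) + lam * ((a + b) / 2) -
      Real.sqrt (a * b) ^ 2 / ((b - a) / (Real.log b - Real.log a))| ≤
      (a * b * (b - a) * C4 lam p ^ (1 / p) /
          (4 * (((1 - q) * (1 - 2 * q) * (b - a) ^ 2) ^ (1 / q)))) *
        ((C5 q a b + C6 q a b) ^ (1 / q) + (C6 q b a + C5 q b a) ^ (1 / q)) := by
  obtain ⟨hl0, hl1⟩ := hlam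
  set h : ℝ := (b - a) / 2 with hh_def
  set m : ℝ := (a + b) / 2 with hm_def
  have hb : 0 < b := lt_trans ha hab
  have hh : 0 < h := by simp only [hh_def]; linarith
  have hm : 0 < m := by simp only [hm_def]; linarith
  have ham2 : a + h = m := by simp only [hh_def, hm_def]; ring
  have hmh2 : m + h = b := by simp only [hh_def, hm_def]; ring
  have hamlt : a < m := by simp only [hm_def]; linarith
  have hmblt : m < b := by simp only [hm_def]; linarith
  have hab0 : 0 < a * b := mul_pos ha hb
  -- conjugate exponent facts
  have hq0 : 0 < q := lt_trans zero_lt_one hq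
  have hiq : 1 / q < 1 := by rw [div_lt_one hq0]; exact hq
  have hip : 0 < 1 / p := by linarith
  have hp0 : 0 < p := by
    rcases lt_trichotomy p 0 with h'|h'|h'
    · exfalso; have : 1 / p < 0 := div_neg_of_pos_of_neg one_pos h'; linarith
    · exfalso; rw [h'] at hip; simp at hip
    · exact h'
  have hp1 : 1 < p := by
    have hip1 : 1 / p < 1 := by
      have : 0 < 1 / q := by positivity
      linarith
    rwa [div_lt_one hp0] at hip1
  have hpq' : Real.HolderConjugate p q := Real.holderConjugate_iff.2 ⟨hp1, by rw [← one_div, ← one_div]; exact hpq⟩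
  have hlog : Real.log a < Real.log b := Real.log_lt_log ha hab
  -- the two kernel integrals
  set T1 : ℝ := ∫ t in (0:ℝ)..1, (t - lam) * (-(a*b) / (a + h*t)^2) with hT1_def
  set T2 : ℝ := ∫ t in (0:ℝ)..1, (t - (1-lam)) * (-(a*b) / (m + h*t)^2) with hT2_def
  have hT1c : T1 = -(a*b/h^2) * (Real.log m - Real.log a + (a + h*lam) * (m⁻¹ - a⁻¹)) := by
    rw [hT1_def, kernel_integral a h lam (a*b) ha hh, ham2]
  have hT2c : T2 = -(a*b/h^2) * (Real.log b - Real.log m + (m + h*(1-lam)) * (b⁻¹ - m⁻¹)) := by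
    rw [hT2_def, kernel_integral m h (1-lam) (a*b) hm hh, hmh2]
  -- the identity
  have hA : (1 - lam) * (2 * a * b / (a + b)) + lam * ((a + b) / 2) -
      Real.sqrt (a * b) ^ 2 / ((b - a) / (Real.log b - Real.log a))
      = (b - a)/4 * (T1 + T2) := by
    rw [Real.sq_sqrt hab0.le, hT1c, hT2c]
    have h1 : a + b ≠ 0 := by positivity
    have h2 : b - a ≠ 0 := by linarith
    have h3 : Real.log b - Real.log a ≠ 0 := by linarith
    have h4 : h ≠ 0 := hh.ne'
    have h5 : m ≠ 0 := hm.ne'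
    rw [div_div_eq_mul_div]
    simp only [hm_def, hh_def]
    field_simp
    ring
  -- Hölder bounds
  have hbd1 : |T1| ≤ C4 lam p ^ (1/p) *
      (a*b * ((a ^ (1-2*q) - m ^ (1-2*q)) / (h*(2*q-1))) ^ (1/q)) := by
    have := holder_step p q lam a h (a*b) hpq' ha hh hab0
    rw [weight_integral lam p hp1 hl0 hl1, qpow_integral a h q ha hh hq, ham2] at this
    have hC4 : C4 lam p = (lam ^ (p+1) + (1 - lam) ^ (p+1))/(p+1) := rfl
    rw [hT1_def, hC4]
    exact this
  have hbd2 : |T2| ≤ C4 lam p ^ (1/p) *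
      (a*b * ((m ^ (1-2*q) - b ^ (1-2*q)) / (h*(2*q-1))) ^ (1/q)) := by
    have := holder_step p q (1-lam) m h (a*b) hpq' hm hh hab0
    rw [weight_integral (1-lam) p hp1 (by linarith) (by linarith),
      qpow_integral m h q hm hh hq, hmh2,
      show (1:ℝ)-(1-lam) = lam by ring,
      add_comm ((1-lam) ^ (p+1)) (lam ^ (p+1))] at this
    have hC4 : C4 lam p = (lam ^ (p+1) + (1 - lam) ^ (p+1))/(p+1) := rfl
    rw [hT2_def, hC4]
    exact this
  -- simplification of C5 + C6
  have hE1 : (0:ℝ) ≤ a ^ (1-2*q) - m ^ (1-2*q) := by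
    have := Real.rpow_le_rpow_of_nonpos ha hamlt.le (show 1-2*q ≤ 0 by linarith)
    linarith
  have hE2 : (0:ℝ) ≤ m ^ (1-2*q) - b ^ (1-2*q) := by
    have := Real.rpow_le_rpow_of_nonpos hm hmblt.le (show 1-2*q ≤ 0 by linarith)
    linarith
  have hs1 : C5 q a b + C6 q a b = 2*(q-1)*(b-a) * (a ^ (1-2*q) - m ^ (1-2*q)) := by
    rw [C5, C6, show (2:ℝ)-2*q = 1+(1-2*q) by ring, Real.rpow_add ha, Real.rpow_one, ← hm_def]
    ring
  have hs2 : C6 q b a + C5 q b a = 2*(q-1)*(b-a) * (m ^ (1-2*q) - b ^ (1-2*q)) := by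
    rw [C5, C6, show (2:ℝ)-2*q = 1+(1-2*q) by ring, Real.rpow_add hb, Real.rpow_one,
      show (b+a)/2 = m by rw [hm_def]; ring]
    ring
  -- rewrite RHS
  have hDden : (0:ℝ) < (1-q) * (1-2*q) * (b-a)^2 := by
    have := mul_pos (mul_pos (show (0:ℝ) < q-1 by linarith) (show (0:ℝ) < 2*q-1 by linarith))
      (pow_pos (show (0:ℝ) < b-a by linarith) 2)
    nlinarith [this]
  have key1 : ((C5 q a b + C6 q a b)) ^ (1/q) / ((1-q)*(1-2*q)*(b-a)^2) ^ (1/q)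
      = ((a ^ (1-2*q) - m ^ (1-2*q)) / (h*(2*q-1))) ^ (1/q) := by
    rw [← Real.div_rpow (by rw [hs1]; exact mul_nonneg (by nlinarith) hE1) hDden.le]
    congr 1
    rw [hs1, div_eq_div_iff hDden.ne' (mul_pos hh (show (0:ℝ) < 2*q-1 by linarith)).ne', hh_def]
    ring
  have key2 : ((C6 q b a + C5 q b a)) ^ (1/q) / ((1-q)*(1-2*q)*(b-a)^2) ^ (1/q)
      = ((m ^ (1-2*q) - b ^ (1-2*q)) / (h*(2*q-1))) ^ (1/q) := by
    rw [← Real.div_rpow (by rw [hs2]; exact mul_nonneg (by nlinarith) hE2) hDden.le]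
    congr 1
    rw [hs2, div_eq_div_iff hDden.ne' (mul_pos hh (show (0:ℝ) < 2*q-1 by linarith)).ne', hh_def]
    ring
  have hDq : (0:ℝ) < ((1-q)*(1-2*q)*(b-a)^2) ^ (1/q) := Real.rpow_pos_of_pos hDden _
  have hRHS : (a * b * (b - a) * C4 lam p ^ (1 / p) /
          (4 * (((1 - q) * (1 - 2 * q) * (b - a) ^ 2) ^ (1 / q)))) *
        ((C5 q a b + C6 q a b) ^ (1 / q) + (C6 q b a + C5 q b a) ^ (1 / q))
      = (b-a)/4 * (C4 lam p ^ (1/p) *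
          (a*b * ((a ^ (1-2*q) - m ^ (1-2*q)) / (h*(2*q-1))) ^ (1/q))
        + C4 lam p ^ (1/p) *
          (a*b * ((m ^ (1-2*q) - b ^ (1-2*q)) / (h*(2*q-1))) ^ (1/q))) := by
    rw [← key1, ← key2]
    field_simp
  rw [hA, hRHS]
  calc |(b-a)/4 * (T1 + T2)| = (b-a)/4 * |T1 + T2| := by
        rw [abs_mul, abs_of_pos (by linarith : (0:ℝ) < (b-a)/4)]
    _ ≤ (b-a)/4 * (|T1| + |T2|) := by
        apply mul_le_mul_of_nonneg_left (abs_add_le _ _) (by linarith)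
    _ ≤ _ := mul_le_mul_of_nonneg_left (add_le_add hbd1 hbd2) (by linarith)
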